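/- Define b̃_n = (-1)^n · Σ_{k=0}^{n} C(n,k)² · C(2k,k) · C(2(n-k), n-k). Then for every prime p with p ∤ 6 and all positive integers ℓ, r, one has b̃_{ℓp^r} ≡ b̃_{ℓp^{r-1}} (mod p^r). -/

import Mathlib

open Finset Polynomial

namespace DombAux

abbrev R2 : Type := Polynomial ℤ
abbrev R1 : Type := Polynomial R2
abbrev R0 : Type := Polynomial R1

noncomputable def xx : R0 := C (C X)
noncomputable def yy : R0 := C X
noncomputable def zz : R0 := X

noncomputable def P : R0 :=
  (1 + xx) * (xx * yy ^ 2 * (1 + zz ^ 2) ^ 2 + zz ^ 2 * (1 + yy ^ 2) ^ 2)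

/-- triple coefficient extraction -/
noncomputable def E (a b c : ℕ) (f : R0) : ℤ := ((f.coeff a).coeff b).coeff c

lemma E_sub (a b c : ℕ) (f g : R0) : E a b c (f - g) = E a b c f - E a b c g := by
  simp [E, coeff_sub]

lemma E_int_mul (a b c : ℕ) (m : ℤ) (f : R0) :
    E a b c ((m : R0) * f) = m * E a b c f := by
  have h : (C (C (C m)) : R0) = (m : R0) := rfl
  rw [← h]
  simp [E, coeff_C_mul]

section frob

variable {p : ℕ}

lemma fermat_int (hp : p.Prime) (a : ℤ) : (p : ℤ) ∣ a ^ p - a := by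
  haveI : Fact p.Prime := ⟨hp⟩
  have h : ((a ^ p - a : ℤ) : ZMod p) = 0 := by
    push_cast
    rw [ZMod.pow_card]
    ring
  exact_mod_cast (ZMod.intCast_zmod_eq_zero_iff_dvd _ p).mp h

lemma frob_step {S : Type} [CommRing S] (hp : p.Prime) (ψ : S →+* S)
    (hψ : ∀ a : S, (p : S) ∣ ψ a - a ^ p) (f : Polynomial S) :
    (p : Polynomial S) ∣ expand S p (f.map ψ) - f ^ p := by
  induction f using Polynomial.induction_on' with
  | add f g hf hg =>
      obtain ⟨s, hs⟩ := exists_add_pow_prime_eq hp f g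
      have h1 : (p : Polynomial S) ∣ (f + g) ^ p - f ^ p - g ^ p :=
        ⟨f * g * s, by rw [hs]; ring⟩
      have h2 := dvd_sub (dvd_add hf hg) h1
      convert h2 using 1
      simp only [Polynomial.map_add, map_add]
      ring
  | monomial m a =>
      obtain ⟨u, hu⟩ := hψ a
      have hψa : ψ a = a ^ p + ↑p * u := by linear_combination hu
      refine ⟨C u * X ^ (m * p), ?_⟩
      rw [Polynomial.map_monomial, ← C_mul_X_pow_eq_monomial, ← C_mul_X_pow_eq_monomial,
        map_mul, map_pow, expand_X, expand_C, hψa]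
      simp only [map_add, map_mul, map_pow, C_eq_natCast]
      ring

noncomputable def Φ2 (p : ℕ) : R2 →+* R2 := (expand ℤ p).toRingHom
noncomputable def Φ1 (p : ℕ) : R1 →+* R1 :=
  ((expand R2 p).toRingHom).comp (mapRingHom (Φ2 p))
noncomputable def Φ0 (p : ℕ) : R0 →+* R0 :=
  ((expand R1 p).toRingHom).comp (mapRingHom (Φ1 p))

lemma frob2 (hp : p.Prime) (f : R2) : (p : R2) ∣ Φ2 p f - f ^ p := by
  have := frob_step hp (RingHom.id ℤ) (fun a => by
    simpa [neg_sub] using (dvd_neg.mpr (fermat_int hp a))) f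
  simpa [Φ2, Polynomial.map_id] using this

lemma frob1 (hp : p.Prime) (f : R1) : (p : R1) ∣ Φ1 p f - f ^ p := by
  exact frob_step hp (Φ2 p) (fun a => frob2 hp a) f

lemma frob0 (hp : p.Prime) (f : R0) : (p : R0) ∣ Φ0 p f - f ^ p := by
  exact frob_step hp (Φ1 p) (fun a => frob1 hp a) f

lemma key (hp : p.Prime) (ℓ r : ℕ) (hr : 1 ≤ r) (f : R0) :
    ((p : R0)) ^ r ∣ Φ0 p (f ^ (ℓ * p ^ (r - 1))) - f ^ (ℓ * p ^ r) := by
  have h := frob0 hp f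
  have h2 := dvd_sub_pow_of_dvd_sub (R := R0) (p := p) h (r - 1)
  rw [Nat.sub_add_cancel hr] at h2
  -- h2 : (p:R0)^r ∣ (Φ0 p f)^(p^(r-1)) - (f^p)^(p^(r-1))
  have hA : (Φ0 p f) ^ (p ^ (r - 1)) = Φ0 p (f ^ (p ^ (r - 1))) := (map_pow _ _ _).symm
  have hB : (f ^ p) ^ (p ^ (r - 1)) = f ^ (p ^ r) := by
    rw [← pow_mul, ← pow_succ', Nat.sub_add_cancel hr]
  rw [hA, hB] at h2
  have h3 : Φ0 p (f ^ (p ^ (r - 1))) - f ^ (p ^ r) ∣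
      (Φ0 p (f ^ (p ^ (r - 1)))) ^ ℓ - (f ^ (p ^ r)) ^ ℓ :=
    by exact sub_dvd_pow_sub_pow (R := R0) _ _ ℓ
  have h4 := h2.trans h3
  rw [← map_pow, ← pow_mul, ← pow_mul, mul_comm (p ^ (r-1)) ℓ, mul_comm (p ^ r) ℓ] at h4
  exact h4

lemma E_phi (hp : 0 < p) (a b c : ℕ) (f : R0) :
    E (p * a) (p * b) (p * c) (Φ0 p f) = E a b c f := by
  simp only [E, Φ0, RingHom.comp_apply, AlgHom.toRingHom_eq_coe,
    RingHom.coe_coe, coe_mapRingHom]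
  rw [coeff_expand_mul' hp, coeff_map]
  simp only [Φ1, RingHom.comp_apply, AlgHom.toRingHom_eq_coe,
    RingHom.coe_coe, coe_mapRingHom]
  rw [coeff_expand_mul' hp, coeff_map]
  simp only [Φ2, AlgHom.toRingHom_eq_coe, RingHom.coe_coe]
  rw [coeff_expand_mul' hp]

end frob

section comp

lemma coeff_x (n k : ℕ) (hk : k ≤ n) :
    ((1 + X : Polynomial ℤ) ^ n * X ^ k).coeff n = (n.choose k : ℤ) := by
  rw [coeff_mul_X_pow', if_pos hk, coeff_one_add_X_pow]
  exact_mod_cast congrArg (Nat.cast : ℕ → ℤ) (Nat.choose_symm hk)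

lemma coeff_sq (S : Type) [CommRing S] (a b : ℕ) :
    ((1 + X ^ 2 : Polynomial S) ^ (2 * b) * X ^ (2 * a)).coeff (2 * (a + b))
      = ((2 * b).choose b : S) := by
  have h1 : (1 + X ^ 2 : Polynomial S) ^ (2 * b) = expand S 2 ((1 + X) ^ (2 * b)) := by
    rw [map_pow, map_add, map_one, expand_X]
  rw [h1, coeff_mul_X_pow', if_pos (by omega : 2 * a ≤ 2 * (a + b))]
  rw [show 2 * (a + b) - 2 * a = 2 * b by omega]
  rw [coeff_expand_mul' (by norm_num : 0 < 2), coeff_one_add_X_pow]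

lemma E_term (n k : ℕ) (hk : k ≤ n) :
    E (2 * n) (2 * n) n
      ((1 + xx) ^ n *
        ((xx * yy ^ 2 * (1 + zz ^ 2) ^ 2) ^ k * (zz ^ 2 * (1 + yy ^ 2) ^ 2) ^ (n - k)))
    = (n.choose k : ℤ) * ((2 * k).choose k : ℤ) * ((2 * (n - k)).choose (n - k) : ℤ) := by
  have hterm :
      (1 + xx) ^ n *
          ((xx * yy ^ 2 * (1 + zz ^ 2) ^ 2) ^ k * (zz ^ 2 * (1 + yy ^ 2) ^ 2) ^ (n - k))
        = C (C ((1 + X) ^ n * X ^ k) * (X ^ (2 * k) * (1 + X ^ 2) ^ (2 * (n - k))))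
            * ((1 + X ^ 2) ^ (2 * k) * X ^ (2 * (n - k))) := by
    have h1 : (xx * yy ^ 2 * (1 + zz ^ 2) ^ 2) ^ k
        = xx ^ k * yy ^ (2 * k) * (1 + zz ^ 2) ^ (2 * k) := by
      rw [mul_pow (M := R0), mul_pow (M := R0), ← pow_mul (M := R0), ← pow_mul (M := R0)]
    have h2 : (zz ^ 2 * (1 + yy ^ 2) ^ 2) ^ (n - k)
        = zz ^ (2 * (n - k)) * (1 + yy ^ 2) ^ (2 * (n - k)) := by
      rw [mul_pow (M := R0), ← pow_mul (M := R0), ← pow_mul (M := R0)]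
    rw [h1, h2]
    simp only [xx, yy, zz, map_mul, map_pow, map_add, map_one]
    ring
  rw [hterm]
  unfold E
  rw [coeff_C_mul]
  have hz : ((1 + X ^ 2 : R0) ^ (2 * k) * X ^ (2 * (n - k))).coeff (2 * n)
      = ((2 * k).choose k : R1) := by
    have h := coeff_sq R1 (n - k) k
    rwa [show 2 * ((n - k) + k) = 2 * n by omega] at h
  rw [hz]
  rw [mul_assoc, coeff_C_mul]
  have hy : ((X ^ (2 * k) * (1 + X ^ 2) ^ (2 * (n - k)) : R1)
        * ((2 * k).choose k : R1)).coeff (2 * n)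
      = ((2 * (n - k)).choose (n - k) : R2) * ((2 * k).choose k : R2) := by
    rw [← C_eq_natCast, coeff_mul_C, mul_comm (X ^ (2 * k) : R1)]
    have h := coeff_sq R2 k (n - k)
    rw [show 2 * (k + (n - k)) = 2 * n by omega] at h
    rw [h]
  rw [hy]
  have hcast : ((((2 * (n - k)).choose (n - k) : ℕ) : R2) * (((2 * k).choose k : ℕ) : R2))
      = C ((((2 * (n - k)).choose (n - k) * (2 * k).choose k : ℕ) : ℤ)) := by
    simp only [Nat.cast_mul, map_mul, map_natCast]
  rw [hcast, coeff_mul_C, coeff_x n k hk]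
  push_cast
  ring

lemma E_sum (a b c : ℕ) (s : Finset ℕ) (f : ℕ → R0) :
    E a b c (∑ k ∈ s, f k) = ∑ k ∈ s, E a b c (f k) := by
  simp [E, finset_sum_coeff]

lemma coeff_P_pow (n : ℕ) :
    E (2 * n) (2 * n) n (P ^ n)
      = ∑ k ∈ range (n + 1),
          (n.choose k : ℤ) ^ 2 * ((2 * k).choose k : ℤ) * ((2 * (n - k)).choose (n - k) : ℤ) := by
  have hP : P ^ n = ∑ k ∈ range (n + 1),
      ((n.choose k : ℤ) : R0) *
        ((1 + xx) ^ n *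
          ((xx * yy ^ 2 * (1 + zz ^ 2) ^ 2) ^ k * (zz ^ 2 * (1 + yy ^ 2) ^ 2) ^ (n - k))) := by
    unfold P
    rw [mul_pow (M := R0), add_pow (R := R0) (xx * yy ^ 2 * (1 + zz ^ 2) ^ 2) (zz ^ 2 * (1 + yy ^ 2) ^ 2) n, Finset.mul_sum]
    refine Finset.sum_congr rfl fun k hk => ?_
    have hcst : ((n.choose k : ℤ) : R0) = ((n.choose k : ℕ) : R0) := rfl
    rw [hcst]
    ring
  rw [hP, E_sum]
  refine Finset.sum_congr rfl fun k hk => ?_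
  rw [E_int_mul, E_term n k (Nat.lt_succ_iff.mp (Finset.mem_range.mp hk))]
  ring

end comp

end DombAux

open DombAux in
/-- the numbers `b̃_n = (−1)^n Σ_k C(n,k)² C(2k,k) C(2(n−k),n−k)` satisfy
`b̃_{ℓp^r} ≡ b̃_{ℓp^{r-1}} (mod p^r)` for every prime `p ∤ 6`. -/
theorem domb_type_congruence (b : ℕ → ℤ)
    (hb : ∀ n : ℕ, b n = (-1 : ℤ) ^ n * ∑ k ∈ range (n + 1),
      ((n.choose k : ℤ)) ^ 2 * ((2 * k).choose k : ℤ) * ((2 * (n - k)).choose (n - k) : ℤ))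
    (p : ℕ) (hp : p.Prime) (hp6 : ¬ p ∣ 6) (ℓ r : ℕ) (hℓ : 1 ≤ ℓ) (hr : 1 ≤ r) :
    b (ℓ * p ^ r) ≡ b (ℓ * p ^ (r - 1)) [ZMOD ((p : ℤ) ^ r)] := by
  have hodd : Odd p := hp.odd_of_ne_two (by rintro rfl; exact hp6 (by norm_num))
  set n1 := ℓ * p ^ r with hn1def
  set n0 := ℓ * p ^ (r - 1) with hn0def
  have hppow : p ^ r = p * p ^ (r - 1) := by
    conv_lhs => rw [← Nat.sub_add_cancel hr]
    rw [pow_succ]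
    ring
  have hn1 : n1 = p * n0 := by rw [hn1def, hn0def, hppow]; ring
  obtain ⟨g, hg⟩ := key (p := p) hp ℓ r hr P
  have hE : E (2 * n1) (2 * n1) n1 (Φ0 p (P ^ n0)) = E (2 * n0) (2 * n0) n0 (P ^ n0) := by
    rw [hn1, show 2 * (p * n0) = p * (2 * n0) by ring]
    exact E_phi hp.pos _ _ _ _
  have hdvd : ((p : ℤ)) ^ r ∣
      E (2 * n0) (2 * n0) n0 (P ^ n0) - E (2 * n1) (2 * n1) n1 (P ^ n1) := by
    rw [← hE, ← E_sub]
    have hcast : ((p : R0)) ^ r = (((p : ℤ) ^ r : ℤ) : R0) := by norm_cast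
    rw [hg, hcast, E_int_mul]
    exact dvd_mul_right _ _
  have hsign : ((-1 : ℤ)) ^ n1 = (-1) ^ n0 := by
    rw [hn1def, hn0def, mul_comm ℓ (p ^ r), mul_comm ℓ (p ^ (r - 1)), pow_mul, pow_mul,
      Odd.neg_one_pow (hodd.pow), Odd.neg_one_pow (hodd.pow)]
  refine Int.modEq_iff_dvd.mpr ?_
  rw [hb n0, hb n1, hsign, ← coeff_P_pow n0, ← coeff_P_pow n1, ← mul_sub]
  exact Dvd.dvd.mul_left hdvd _
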